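/- arXiv:2210.07724 — 3 statements merged into one kernel-verified Lean document; each statement's English description precedes it below -/
import Mathlib

section
/- Limit–colimit coincidence for ω-chains of ep-pairs in ωCPO: given an ω-chain of ωCPOs D₀ → D₁ → D₂ → ⋯ where each connecting map e_n : D_n → D_{n+1} is the embedding of an ep-pair (e_n, p_n), the colimit D of the chain of embeddings exists, the colimit injections ι_n : D_n → D are themselves embeddings of ep-pairs, and the corresponding projections D → D_n form a limit cone over the chain of projections (p_n). -/
open OmegaCompletePartialOrder

universe u

/-- The inverse limit of an ω-chain along projections: compatible sequences. -/
def InvLim (D : ℕ → Type u) [∀ n, PartialOrder (D n)]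
    (p : ∀ n, D (n + 1) → D n) : Type u :=
  {x : ∀ n, D n // ∀ n, p n (x (n + 1)) = x n}

instance (D : ℕ → Type u) [∀ n, PartialOrder (D n)] (p : ∀ n, D (n + 1) → D n) :
    PartialOrder (InvLim D p) :=
  inferInstanceAs (PartialOrder {x : ∀ n, D n // ∀ n, p n (x (n + 1)) = x n})

namespace LCC

variable {D : ℕ → Type u}

def embdAux (e : ∀ n, D n → D (n + 1)) (n : ℕ) : ∀ m, n ≤ m → D n → D m
  | 0, h, x => cast (congrArg D (Nat.le_zero.mp h)) x
  | m + 1, h, x =>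
      if h' : n ≤ m then e m (embdAux e n m h' x)
      else cast (congrArg D (Nat.le_antisymm h (not_le.mp h'))) x

def projAux (p : ∀ n, D (n + 1) → D n) (m : ℕ) : ∀ n, m ≤ n → D n → D m
  | 0, h, x => cast (congrArg D (Nat.le_zero.mp h).symm) x
  | n + 1, h, x =>
      if h' : m ≤ n then projAux p m n h' (p n x)
      else cast (congrArg D (Nat.le_antisymm h (not_le.mp h')).symm) x

theorem embd_self (e : ∀ n, D n → D (n + 1)) (n : ℕ) (h : n ≤ n) (x : D n) :
    embdAux e n n h x = x := by
  cases n with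
  | zero => rfl
  | succ n => simp [embdAux]

theorem embd_succ (e : ∀ n, D n → D (n + 1)) (n m : ℕ) (h : n ≤ m) (h2 : n ≤ m + 1) (x : D n) :
    embdAux e n (m + 1) h2 x = e m (embdAux e n m h x) := by
  simp [embdAux, h]

theorem proj_self (p : ∀ n, D (n + 1) → D n) (m : ℕ) (h : m ≤ m) (x : D m) :
    projAux p m m h x = x := by
  cases m with
  | zero => rfl
  | succ m => simp [projAux]

theorem proj_succ (p : ∀ n, D (n + 1) → D n) (m n : ℕ) (h : m ≤ n) (h2 : m ≤ n + 1)
    (x : D (n + 1)) : projAux p m (n + 1) h2 x = projAux p m n h (p n x) := by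
  simp [projAux, h]

set_option linter.unusedSectionVars false

section Order
variable [∀ n, PartialOrder (D n)]
variable (e : ∀ n, D n → D (n + 1)) (p : ∀ n, D (n + 1) → D n)

theorem embd_mono (hemono : ∀ n, Monotone (e n)) (n m : ℕ) (h : n ≤ m) :
    Monotone (embdAux e n m h) := by
  induction m with
  | zero =>
      obtain rfl : n = 0 := Nat.le_zero.mp h
      intro x y hxy; exact hxy
  | succ m ih =>
      by_cases h' : n ≤ m
      · intro x y hxy
        rw [embd_succ e n m h', embd_succ e n m h']
        exact hemono m (ih h' hxy)
      · obtain rfl : n = m + 1 := Nat.le_antisymm h (not_le.mp h')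
        intro x y hxy
        rw [embd_self, embd_self]; exact hxy

theorem proj_mono (hpmono : ∀ n, Monotone (p n)) (m n : ℕ) (h : m ≤ n) :
    Monotone (projAux p m n h) := by
  induction n with
  | zero =>
      obtain rfl : m = 0 := Nat.le_zero.mp h
      intro x y hxy; exact hxy
  | succ n ih =>
      by_cases h' : m ≤ n
      · intro x y hxy
        rw [proj_succ p m n h', proj_succ p m n h']
        exact ih h' (hpmono n hxy)
      · obtain rfl : m = n + 1 := Nat.le_antisymm h (not_le.mp h')
        intro x y hxy
        rw [proj_self, proj_self]; exact hxy

theorem p_proj (m n : ℕ) (h : m + 1 ≤ n) (h2 : m ≤ n) (x : D n) :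
    p m (projAux p (m + 1) n h x) = projAux p m n h2 x := by
  induction n with
  | zero => exact absurd h (by omega)
  | succ n ih =>
      by_cases h' : m + 1 ≤ n
      · rw [proj_succ p (m + 1) n h', proj_succ p m n (by omega), ih h' (by omega)]
      · obtain rfl : m = n := by omega
        rw [proj_self, proj_succ p m m le_rfl, proj_self]

theorem embd_e (m n : ℕ) (h : n + 1 ≤ m) (h2 : n ≤ m) (x : D n) :
    embdAux e (n + 1) m h (e n x) = embdAux e n m h2 x := by
  induction m with
  | zero => exact absurd h (by omega)
  | succ m ih =>
      by_cases h' : n + 1 ≤ m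
      · rw [embd_succ e (n + 1) m h', embd_succ e n m (by omega), ih h' (by omega)]
      · obtain rfl : n = m := by omega
        rw [embd_self, embd_succ e n n le_rfl, embd_self]

theorem proj_eq_of_compat (d : ∀ n, D n) (hd : ∀ n, p n (d (n + 1)) = d n)
    (m n : ℕ) (h : m ≤ n) : projAux p m n h (d n) = d m := by
  induction n with
  | zero => obtain rfl : m = 0 := Nat.le_zero.mp h; exact proj_self p 0 h (d 0)
  | succ n ih =>
      by_cases h' : m ≤ n
      · rw [proj_succ p m n h', hd n, ih h']
      · obtain rfl : m = n + 1 := Nat.le_antisymm h (not_le.mp h')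
        exact proj_self p _ h _

theorem embd_le_of_compat (hemono : ∀ n, Monotone (e n))
    (hep : ∀ n y, e n (p n y) ≤ y)
    (d : ∀ n, D n) (hd : ∀ n, p n (d (n + 1)) = d n)
    (n m : ℕ) (h : n ≤ m) : embdAux e n m h (d n) ≤ d m := by
  induction m with
  | zero => obtain rfl : n = 0 := Nat.le_zero.mp h; rw [embd_self]
  | succ m ih =>
      by_cases h' : n ≤ m
      · rw [embd_succ e n m h']
        calc e m (embdAux e n m h' (d n)) ≤ e m (d m) := hemono m (ih h')
          _ = e m (p m (d (m + 1))) := by rw [hd m]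
          _ ≤ d (m + 1) := hep m (d (m + 1))
      · obtain rfl : n = m + 1 := Nat.le_antisymm h (not_le.mp h')
        rw [embd_self]

/-- The colimit injection into the inverse limit. -/
def iota (hpe : ∀ n x, p n (e n x) = x) (n : ℕ) (x : D n) : InvLim D p :=
  ⟨fun m => if h : n ≤ m then embdAux e n m h x else projAux p m n (le_of_not_ge h) x, by
    intro m
    beta_reduce
    by_cases h1 : n ≤ m
    · rw [dif_pos (le_trans h1 (Nat.le_succ m)), dif_pos h1,
        embd_succ e n m h1, hpe]
    · by_cases h2 : n ≤ m + 1
      · obtain rfl : n = m + 1 := Nat.le_antisymm h2 (not_le.mp h1)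
        rw [dif_pos le_rfl, dif_neg h1, embd_self,
          proj_succ p m m le_rfl, proj_self]
      · rw [dif_neg h2, dif_neg h1]
        exact p_proj p m n (le_of_not_ge h2) (le_of_not_ge h1) x⟩

theorem isLUB_invLim {f : ℕ → InvLim D p} {g : InvLim D p}
    (h : ∀ m, IsLUB (Set.range fun k => (f k).1 m) (g.1 m)) :
    IsLUB (Set.range f) g := by
  constructor
  · rintro y ⟨k, rfl⟩
    show (f k).1 ≤ g.1
    exact fun m => (h m).1 ⟨k, rfl⟩
  · intro b hb
    show g.1 ≤ b.1
    intro m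
    refine (h m).2 ?_
    rintro y ⟨k, rfl⟩
    exact hb ⟨k, rfl⟩ m

end Order

theorem isLUB_ωSup' {α : Type*} [OmegaCompletePartialOrder α] (c : Chain α) :
    IsLUB (Set.range fun k => c k) (ωSup c) := by
  constructor
  · rintro y ⟨k, rfl⟩; exact le_ωSup c k
  · intro y hy; exact ωSup_le c y fun k => hy ⟨k, rfl⟩

section Cont
variable [∀ n, OmegaCompletePartialOrder (D n)]
variable (e : ∀ n, D n → D (n + 1)) (p : ∀ n, D (n + 1) → D n)

theorem proj_cont
    (hpmono : ∀ n, Monotone (p n))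
    (hpcont : ∀ n (c : ℕ →o D (n + 1)) (a : D (n + 1)),
      IsLUB (Set.range fun k => c k) a → IsLUB (Set.range fun k => p n (c k)) (p n a))
    (m : ℕ) : ∀ (n : ℕ) (h : m ≤ n) (c : ℕ →o D n) (a : D n),
      IsLUB (Set.range fun k => c k) a →
      IsLUB (Set.range fun k => projAux p m n h (c k)) (projAux p m n h a) := by
  intro n
  induction n with
  | zero =>
      intro h c a hc
      obtain rfl : m = 0 := Nat.le_zero.mp h
      simpa [proj_self] using hc
  | succ n ih =>
      intro h c a hc
      by_cases h' : m ≤ n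
      · have := ih h' ⟨fun k => p n (c k), fun i j hij => hpmono n (c.mono hij)⟩
          (p n a) (hpcont n c a hc)
        simp only [proj_succ p m n h']; exact this
      · obtain rfl : m = n + 1 := Nat.le_antisymm h (not_le.mp h')
        simpa [proj_self] using hc

theorem embd_cont
    (hemono : ∀ n, Monotone (e n))
    (hecont : ∀ n (c : ℕ →o D n) (a : D n),
      IsLUB (Set.range fun k => c k) a → IsLUB (Set.range fun k => e n (c k)) (e n a))
    (n : ℕ) : ∀ (m : ℕ) (h : n ≤ m) (c : ℕ →o D n) (a : D n),
      IsLUB (Set.range fun k => c k) a →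
      IsLUB (Set.range fun k => embdAux e n m h (c k)) (embdAux e n m h a) := by
  intro m
  induction m with
  | zero =>
      intro h c a hc
      obtain rfl : n = 0 := Nat.le_zero.mp h
      simpa [embd_self] using hc
  | succ m ih =>
      intro h c a hc
      by_cases h' : n ≤ m
      · have := hecont m ⟨fun k => embdAux e n m h' (c k),
          fun i j hij => embd_mono e hemono n m h' (c.mono hij)⟩
          (embdAux e n m h' a) (ih h' c a hc)
        simp only [embd_succ e n m h']; exact this
      · obtain rfl : n = m + 1 := Nat.le_antisymm h (not_le.mp h')
        simpa [embd_self] using hc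

end Cont

end LCC

/-- Limit–colimit coincidence for ω-chains of ep-pairs in ωCPO: given an
ω-chain of ωCPOs whose connecting maps are embeddings of ep-pairs `(e n, p n)`,
the inverse limit `InvLim D p` is an ωCPO (every ω-chain in it has a least
upper bound), it is a colimit of the chain of embeddings with colimit
injections `ι n` that are themselves embeddings of ep-pairs with projections
`π n` (in particular every element is the least upper bound of the chain
`ι n (π n d)`), both `ι n` and `π n` are monotone and ω-continuous, and the
`π n` form a limit cone over the chain of projections. -/
theorem limit_colimit_coincidence (D : ℕ → Type u)
    [∀ n, OmegaCompletePartialOrder (D n)]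
    (e : ∀ n, D n → D (n + 1)) (p : ∀ n, D (n + 1) → D n)
    (hemono : ∀ n, Monotone (e n)) (hpmono : ∀ n, Monotone (p n))
    (hecont : ∀ n (c : ℕ →o D n) (a : D n), IsLUB (Set.range fun k => c k) a →
      IsLUB (Set.range fun k => e n (c k)) (e n a))
    (hpcont : ∀ n (c : ℕ →o D (n + 1)) (a : D (n + 1)),
      IsLUB (Set.range fun k => c k) a →
        IsLUB (Set.range fun k => p n (c k)) (p n a))
    (hpe : ∀ n x, p n (e n x) = x) (hep : ∀ n y, e n (p n y) ≤ y) :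
    (∀ c : ℕ →o InvLim D p, ∃ a : InvLim D p, IsLUB (Set.range fun k => c k) a) ∧
    ∃ (ι : ∀ n, D n → InvLim D p) (π : ∀ n, InvLim D p → D n),
      (∀ n, Monotone (ι n)) ∧ (∀ n, Monotone (π n)) ∧
      (∀ n (c : ℕ →o D n) (a : D n), IsLUB (Set.range fun k => c k) a →
        IsLUB (Set.range fun k => ι n (c k)) (ι n a)) ∧
      (∀ n (c : ℕ →o InvLim D p) (a : InvLim D p),
        IsLUB (Set.range fun k => c k) a →
          IsLUB (Set.range fun k => π n (c k)) (π n a)) ∧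
      (∀ n x, π n (ι n x) = x) ∧ (∀ n d, ι n (π n d) ≤ d) ∧
      (∀ n x, ι (n + 1) (e n x) = ι n x) ∧
      (∀ n d, p n (π (n + 1) d) = π n d) ∧
      (∀ d : InvLim D p, IsLUB (Set.range fun n => ι n (π n d)) d) ∧
      (∀ x : ∀ n, D n, (∀ n, p n (x (n + 1)) = x n) →
        ∃! d : InvLim D p, ∀ n, π n d = x n) := by
  classical
  have le_iff : ∀ a b : InvLim D p, a ≤ b ↔ ∀ n, a.1 n ≤ b.1 n := fun a b => Iff.rfl
  have iota_comp : ∀ (n : ℕ) (x : D n) (m : ℕ), (LCC.iota e p hpe n x).1 m =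
      if h : n ≤ m then LCC.embdAux e n m h x
      else LCC.projAux p m n (le_of_not_ge h) x := fun _ _ _ => rfl
  have key : ∀ c : ℕ →o InvLim D p, ∃ a : InvLim D p,
      IsLUB (Set.range fun k => c k) a ∧
      ∀ m, IsLUB (Set.range fun k => (c k).1 m) (a.1 m) := by
    intro c
    have mono : ∀ m, Monotone fun k => (c k).1 m :=
      fun m i j hij => (le_iff _ _).mp (c.mono hij) m
    refine ⟨⟨fun m => ωSup ⟨fun k => (c k).1 m, mono m⟩, ?_⟩, ?_, ?_⟩
    · intro m
      have h1 := LCC.isLUB_ωSup' (⟨fun k => (c k).1 (m + 1), mono (m + 1)⟩ : Chain (D (m + 1)))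
      have h2 := hpcont m ⟨fun k => (c k).1 (m + 1), mono (m + 1)⟩ _ h1
      have h3 : (fun k => p m ((c k).1 (m + 1))) = fun k => (c k).1 m :=
        funext fun k => (c k).2 m
      replace h2 : IsLUB (Set.range fun k => (c k).1 m)
          (p m (ωSup (⟨fun k => (c k).1 (m + 1), mono (m + 1)⟩ : Chain (D (m + 1))))) := by
        rw [← h3]; exact h2
      exact h2.unique (LCC.isLUB_ωSup' ⟨fun k => (c k).1 m, mono m⟩)
    · exact LCC.isLUB_invLim p fun m => LCC.isLUB_ωSup' ⟨fun k => (c k).1 m, mono m⟩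
    · intro m
      exact LCC.isLUB_ωSup' ⟨fun k => (c k).1 m, mono m⟩
  have comp_lub : ∀ (c : ℕ →o InvLim D p) (a : InvLim D p),
      IsLUB (Set.range fun k => c k) a →
      ∀ m, IsLUB (Set.range fun k => (c k).1 m) (a.1 m) := by
    intro c a ha m
    obtain ⟨a', h1, h2⟩ := key c
    obtain rfl : a = a' := ha.unique h1
    exact h2 m
  have hretr : ∀ (n : ℕ) (x : D n), (LCC.iota e p hpe n x).1 n = x := by
    intro n x
    rw [iota_comp, dif_pos le_rfl, LCC.embd_self]
  have hbelow : ∀ (n : ℕ) (d : InvLim D p), LCC.iota e p hpe n (d.1 n) ≤ d := by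
    intro n d
    refine (le_iff _ _).mpr fun m => ?_
    rw [iota_comp]
    split_ifs with h
    · exact LCC.embd_le_of_compat e p hemono hep d.1 d.2 n m h
    · exact le_of_eq (LCC.proj_eq_of_compat p d.1 d.2 m n (le_of_not_ge h))
  refine ⟨fun c => (key c).imp fun a h => h.1,
    LCC.iota e p hpe, fun n d => d.1 n, ?_, ?_, ?_, ?_, ?_, ?_, ?_, ?_, ?_, ?_⟩
  · -- ι monotone
    intro n x y hxy
    refine (le_iff _ _).mpr fun m => ?_
    rw [iota_comp, iota_comp]
    split_ifs with h
    · exact LCC.embd_mono e hemono n m h hxy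
    · exact LCC.proj_mono p hpmono m n _ hxy
  · -- π monotone
    intro n x y hxy
    exact (le_iff _ _).mp hxy n
  · -- ι continuous
    intro n c a hc
    refine LCC.isLUB_invLim p fun m => ?_
    by_cases h : n ≤ m
    · have := LCC.embd_cont e hemono hecont n m h c a hc
      simpa [iota_comp, h] using this
    · have := LCC.proj_cont p hpmono hpcont m n (le_of_not_ge h) c a hc
      simpa [iota_comp, h] using this
  · -- π continuous
    intro n c a hc
    exact comp_lub c a hc n
  · -- retraction
    exact hretr
  · -- below identity
    intro n d
    exact hbelow n d
  · -- cocone compatibility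
    intro n x
    refine Subtype.ext (funext fun m => ?_)
    show (LCC.iota e p hpe (n + 1) (e n x)).1 m = (LCC.iota e p hpe n x).1 m
    rw [iota_comp, iota_comp]
    by_cases h1 : n + 1 ≤ m
    · rw [dif_pos h1, dif_pos (by omega : n ≤ m)]
      exact LCC.embd_e e m n h1 (by omega) x
    · by_cases h2 : n ≤ m
      · obtain rfl : n = m := by omega
        rw [dif_neg h1, dif_pos le_rfl, LCC.embd_self,
          LCC.proj_succ p n n le_rfl, LCC.proj_self, hpe]
      · rw [dif_neg h1, dif_neg h2, LCC.proj_succ p m n (by omega), hpe]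
  · -- cone compatibility
    intro n d
    exact d.2 n
  · -- every element is lub of ι n (π n d)
    intro d
    constructor
    · rintro y ⟨n, rfl⟩
      exact hbelow n d
    · intro b hb
      refine (le_iff _ _).mpr fun m => ?_
      have h2 := (le_iff _ _).mp (hb ⟨m, rfl⟩) m
      rwa [hretr] at h2
  · -- limit cone
    intro x hx
    exact ⟨⟨x, hx⟩, fun n => rfl, fun d' hd' => Subtype.ext (funext hd')⟩
end

section
/- PAP functions are closed under composition: if f : U → V and g : V → W are PAP functions (U ⊆ ℝⁿ, V ⊆ ℝᵐ, W ⊆ ℝᵏ), then g ∘ f : U → W is PAP. -/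
/-- A subset of `ℝⁿ` is analytic if it is carved out of an open neighbourhood
by finitely many inequalities `gᵢ ≥ 0` with `gᵢ` real-analytic. -/
def IsAnalyticSet {n : ℕ} (A : Set (Fin n → ℝ)) : Prop :=
  ∃ (U : Set (Fin n → ℝ)) (m : ℕ) (g : Fin m → ((Fin n → ℝ) → ℝ)),
    IsOpen U ∧ A ⊆ U ∧ (∀ i, AnalyticOnNhd ℝ (g i) U) ∧
      A = {x ∈ U | ∀ i, 0 ≤ g i x}

/-- `f : U → V` is PAP (piecewise analytic under analytic partition): there is
a countable family of analytic sets `A i` partitioning `U`, open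
neighbourhoods `Uo i ⊇ A i`, and real-analytic `fi i : Uo i → ℝᵐ` agreeing
with `f` on `A i` and landing in `V` there. -/
def IsPAP {n m : ℕ} (U : Set (Fin n → ℝ)) (V : Set (Fin m → ℝ))
    (f : (Fin n → ℝ) → (Fin m → ℝ)) : Prop :=
  ∃ (A : ℕ → Set (Fin n → ℝ)) (Uo : ℕ → Set (Fin n → ℝ))
    (fi : ℕ → ((Fin n → ℝ) → (Fin m → ℝ))),
      (∀ i, IsAnalyticSet (A i)) ∧ Pairwise (Function.onFun Disjoint A) ∧ (⋃ i, A i) = U ∧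
      (∀ i, IsOpen (Uo i)) ∧ (∀ i, A i ⊆ Uo i) ∧
      (∀ i, AnalyticOnNhd ℝ (fi i) (Uo i)) ∧
      (∀ i, ∀ x ∈ A i, fi i x = f x) ∧
      (∀ i, ∀ x ∈ A i, fi i x ∈ V)

/-- PAP functions are closed under composition. -/
theorem isPAP_comp {n m k : ℕ} {U : Set (Fin n → ℝ)} {V : Set (Fin m → ℝ)}
    {W : Set (Fin k → ℝ)} {f : (Fin n → ℝ) → (Fin m → ℝ)}
    {g : (Fin m → ℝ) → (Fin k → ℝ)}
    (hf : IsPAP U V f) (hg : IsPAP V W g) : IsPAP U W (g ∘ f) := by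
  obtain ⟨A, Uo, fi, hAan, hAdisj, hAun, hUoOpen, hAUo, hfian, hfieq, hfiV⟩ := hf
  obtain ⟨B, Vo, gi, hBan, hBdisj, hBun, hVoOpen, hBVo, hgian, hgieq, hgiW⟩ := hg
  -- the new pieces, indexed by pairs
  set C : ℕ × ℕ → Set (Fin n → ℝ) := fun p => A p.1 ∩ (fi p.1) ⁻¹' (B p.2) with hC
  set Oo : ℕ × ℕ → Set (Fin n → ℝ) := fun p => Uo p.1 ∩ (fi p.1) ⁻¹' (Vo p.2) with hOo
  have hCOo : ∀ p, C p ⊆ Oo p := by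
    rintro p x ⟨hx1, hx2⟩
    exact ⟨hAUo _ hx1, hBVo _ hx2⟩
  have hOoOpen : ∀ p, IsOpen (Oo p) :=
    fun p => ((hfian p.1).continuousOn).isOpen_inter_preimage (hUoOpen p.1) (hVoOpen p.2)
  have hOoan : ∀ p, AnalyticOnNhd ℝ (gi p.2 ∘ fi p.1) (Oo p) := fun p =>
    (hgian p.2).comp ((hfian p.1).mono Set.inter_subset_left) (fun x hx => hx.2)
  refine ⟨fun q => C (Nat.pairEquiv.symm q), fun q => Oo (Nat.pairEquiv.symm q),
    fun q => gi (Nat.pairEquiv.symm q).2 ∘ fi (Nat.pairEquiv.symm q).1,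
    ?_, ?_, ?_, fun q => hOoOpen _, fun q => hCOo _, fun q => hOoan _, ?_, ?_⟩
  · -- each piece is an analytic set
    intro q
    set p := Nat.pairEquiv.symm q
    obtain ⟨UA, mA, gA, hUAopen, hAUA, hgAan, hAeq⟩ := hAan p.1
    obtain ⟨VB, mB, gB, hVBopen, hBVB, hgBan, hBeq⟩ := hBan p.2
    refine ⟨UA ∩ (Uo p.1 ∩ (fi p.1) ⁻¹' VB), mA + mB,
      fun i => Sum.elim gA (fun l => gB l ∘ fi p.1) (finSumFinEquiv.symm i), ?_, ?_, ?_, ?_⟩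
    · exact hUAopen.inter (((hfian p.1).continuousOn).isOpen_inter_preimage
        (hUoOpen p.1) hVBopen)
    · rintro x ⟨hx1, hx2⟩
      have hxU : x ∈ UA := hAUA hx1
      exact ⟨hxU, hAUo _ hx1, hBVB hx2⟩
    · intro i
      obtain ⟨s, rfl⟩ : ∃ s, i = finSumFinEquiv s := ⟨_, (finSumFinEquiv.apply_symm_apply i).symm⟩
      rcases s with l | l <;> simp only [Equiv.symm_apply_apply]
      · exact (hgAan l).mono Set.inter_subset_left
      · exact (hgBan l).comp (((hfian p.1).mono
          (Set.inter_subset_right.trans Set.inter_subset_left)))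
          (fun x hx => hx.2.2)
    · ext x
      constructor
      · rintro ⟨hx1, hx2⟩
        have hxA : x ∈ {x ∈ UA | ∀ i, 0 ≤ gA i x} := hAeq ▸ hx1
        have hxB : fi p.1 x ∈ {y ∈ VB | ∀ i, 0 ≤ gB i y} := hBeq ▸ hx2
        refine ⟨⟨hxA.1, hAUo _ hx1, hxB.1⟩, ?_⟩
        intro i
        obtain ⟨s, rfl⟩ : ∃ s, i = finSumFinEquiv s :=
          ⟨_, (finSumFinEquiv.apply_symm_apply i).symm⟩
        rcases s with l | l <;> simp only [Equiv.symm_apply_apply, Sum.elim_inl, Sum.elim_inr]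
        · exact hxA.2 l
        · exact hxB.2 l
      · rintro ⟨⟨hxUA, hxUo, hxVB⟩, hge⟩
        have hA' : x ∈ A p.1 := by
          rw [hAeq]
          refine ⟨hxUA, fun l => ?_⟩
          simpa [Equiv.symm_apply_apply] using hge (finSumFinEquiv (Sum.inl l))
        have hB' : fi p.1 x ∈ B p.2 := by
          rw [hBeq]
          refine ⟨hxVB, fun l => ?_⟩
          simpa [Equiv.symm_apply_apply] using hge (finSumFinEquiv (Sum.inr l))
        exact ⟨hA', hB'⟩
  · -- pairwise disjoint
    intro q q' hqq'
    have hpp' : Nat.pairEquiv.symm q ≠ Nat.pairEquiv.symm q' :=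
      fun h => hqq' (Nat.pairEquiv.symm.injective h)
    set p := Nat.pairEquiv.symm q
    set p' := Nat.pairEquiv.symm q'
    simp only [Function.onFun, Set.disjoint_left]
    rintro x ⟨hxA, hxB⟩ ⟨hxA', hxB'⟩
    rcases eq_or_ne p.1 p'.1 with h1 | h1
    · have h2 : p.2 ≠ p'.2 := fun h2 => hpp' (Prod.ext h1 h2)
      rw [h1] at hxB
      exact Set.disjoint_left.mp (hBdisj h2) hxB hxB'
    · exact Set.disjoint_left.mp (hAdisj h1) hxA hxA'
  · -- union is U
    apply Set.eq_of_subset_of_subset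
    · refine Set.iUnion_subset fun q => ?_
      rintro x ⟨hxA, _⟩
      exact hAun ▸ Set.mem_iUnion.mpr ⟨_, hxA⟩
    · intro x hx
      rw [← hAun] at hx
      obtain ⟨i, hxA⟩ := Set.mem_iUnion.mp hx
      have hfxV : f x ∈ V := hfieq i x hxA ▸ hfiV i x hxA
      rw [← hBun] at hfxV
      obtain ⟨j, hxB⟩ := Set.mem_iUnion.mp hfxV
      refine Set.mem_iUnion.mpr ⟨Nat.pairEquiv (i, j), ?_⟩
      have : Nat.pairEquiv.symm (Nat.pairEquiv (i, j)) = (i, j) :=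
        Equiv.symm_apply_apply _ _
      rw [this]
      exact ⟨hxA, by rw [Set.mem_preimage, hfieq i x hxA]; exact hxB⟩
  · -- agrees with g ∘ f
    intro q x hx
    set p := Nat.pairEquiv.symm q
    obtain ⟨hxA, hxB⟩ := hx
    have h1 : fi p.1 x = f x := hfieq _ _ hxA
    simp only [Function.comp_apply]
    rw [h1]
    exact hgieq _ _ (h1 ▸ hxB)
  · -- lands in W
    intro q x hx
    set p := Nat.pairEquiv.symm q
    obtain ⟨hxA, hxB⟩ := hx
    exact hgiW _ _ hxB
end

section
/- Let (f_k) be an increasing ω-chain of partial functions ℝⁿ ⇀ ℝᵐ (flat extension order) such that each f_k has open domain U_k, is differentiable on U_k, and its paired derivative candidate ḟ_k equals the true derivative of f_k on U_k × ℝⁿ. Then the supremum f = ⊔_k f_k has open domain U = ⋃_k U_k, is differentiable on U, and its derivative at x ∈ U equals the derivative of f_k at x for any k with x ∈ U_k. -/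
/-- ω-chain closure of the differentiability logical relation: given an
increasing ω-chain of partial functions `ℝⁿ ⇀ ℝᵐ` (represented by open
domains `U k` and total functions `f k` considered on `U k`, extending one
another), each differentiable on its domain with its paired derivative
candidate `df k` equal to the true derivative there, the supremum has open
domain `⋃ k, U k`, extends every `f k`, is differentiable on its domain, and
its derivative at `x ∈ U k` equals the derivative of `f k` at `x`. -/
theorem chain_sup_differentiable {n m : ℕ}
    (U : ℕ → Set (Fin n → ℝ)) (f : ℕ → ((Fin n → ℝ) → (Fin m → ℝ)))
    (df : ℕ → ((Fin n → ℝ) → ((Fin n → ℝ) →L[ℝ] (Fin m → ℝ))))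
    (hopen : ∀ k, IsOpen (U k))
    (hmono : ∀ k, U k ⊆ U (k + 1))
    (hext : ∀ k, Set.EqOn (f (k + 1)) (f k) (U k))
    (hdiff : ∀ k, ∀ x ∈ U k, HasFDerivAt (f k) (df k x) x) :
    IsOpen (⋃ k, U k) ∧
      ∃ F : (Fin n → ℝ) → (Fin m → ℝ),
        (∀ k, Set.EqOn F (f k) (U k)) ∧
        (∀ x ∈ ⋃ k, U k, DifferentiableAt ℝ F x) ∧
        (∀ k, ∀ x ∈ U k, fderiv ℝ F x = df k x) := by
  -- monotonicity of domains
  have hUle : ∀ {j k : ℕ}, j ≤ k → U j ⊆ U k := by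
    intro j k hjk
    induction hjk with
    | refl => exact subset_rfl
    | step h ih => exact fun x hx => hmono _ (ih hx)
  -- extension for arbitrary j ≤ k
  have hExt : ∀ {j k : ℕ}, j ≤ k → Set.EqOn (f k) (f j) (U j) := by
    intro j k hjk
    induction hjk with
    | refl => exact fun x _ => rfl
    | @step l h ih =>
      intro x hx
      have : x ∈ U l := hUle h hx
      exact (hext l this).trans (ih hx)
  classical
  set F : (Fin n → ℝ) → (Fin m → ℝ) := fun x =>
    if h : ∃ k, x ∈ U k then f (Nat.find h) x else 0 with hF
  have hFeq : ∀ k, Set.EqOn F (f k) (U k) := by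
    intro k x hx
    have h : ∃ j, x ∈ U j := ⟨k, hx⟩
    have hfind : Nat.find h ≤ k := Nat.find_le hx
    have hxf : x ∈ U (Nat.find h) := Nat.find_spec h
    simp only [hF, dif_pos h]
    exact (hExt hfind hxf).symm
  have hHas : ∀ k, ∀ x ∈ U k, HasFDerivAt F (df k x) x := by
    intro k x hx
    have hev : F =ᶠ[nhds x] f k :=
      Filter.eventuallyEq_of_mem ((hopen k).mem_nhds hx) (hFeq k)
    exact (hdiff k x hx).congr_of_eventuallyEq hev
  refine ⟨isOpen_iUnion hopen, F, hFeq, ?_, ?_⟩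
  · intro x hx
    obtain ⟨k, hk⟩ := Set.mem_iUnion.1 hx
    exact (hHas k x hk).differentiableAt
  · intro k x hx
    exact (hHas k x hx).fderiv
end
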